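/- arXiv:2401.17350 — 5 statements merged into one kernel-verified Lean document; each statement's English description precedes it below -/
import Mathlib

section
/- Let N be a positive natural number, let K : Matrix (Fin N) (Fin N) ℝ be arbitrary, and let Ω : Matrix (Fin N) (Fin N) ℝ be positive definite. Then K * Kᵀ + Ω is positive definite (hence invertible), and the matrix 1 − Kᵀ * (K * Kᵀ + Ω)⁻¹ * K is positive semidefinite; equivalently, for every x : Fin N → ℝ one has x ⬝ᵥ ((Kᵀ * (K * Kᵀ + Ω)⁻¹ * K) *ᵥ x) ≤ x ⬝ᵥ x. -/
open Matrix

theorem bl_contraction_lemma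
    (N : ℕ) (hN : 0 < N) (K : Matrix (Fin N) (Fin N) ℝ)
    (Ω : Matrix (Fin N) (Fin N) ℝ) (hΩ : Ω.PosDef) :
    (K * Kᵀ + Ω).PosDef ∧ IsUnit (K * Kᵀ + Ω) ∧
    ((1 : Matrix (Fin N) (Fin N) ℝ) - Kᵀ * (K * Kᵀ + Ω)⁻¹ * K).PosSemidef ∧
    (∀ x : Fin N → ℝ,
      x ⬝ᵥ ((Kᵀ * (K * Kᵀ + Ω)⁻¹ * K) *ᵥ x) ≤ x ⬝ᵥ x) := by
  have hKK : (K * Kᵀ).PosSemidef := by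
    have := Matrix.posSemidef_self_mul_conjTranspose K
    simpa using this
  have hS : (K * Kᵀ + Ω).PosDef := by
    refine Matrix.PosDef.of_dotProduct_mulVec_pos (hKK.1.add hΩ.1) fun x hx => ?_
    have h1 := hKK.dotProduct_mulVec_nonneg x
    have h2 := hΩ.dotProduct_mulVec_pos hx
    simp only [add_mulVec, dotProduct_add, star_trivial] at h1 h2 ⊢
    linarith
  have hSdet : IsUnit (K * Kᵀ + Ω).det := isUnit_iff_ne_zero.2 hS.det_pos.ne'
  have key : ∀ x : Fin N → ℝ,
      x ⬝ᵥ ((Kᵀ * (K * Kᵀ + Ω)⁻¹ * K) *ᵥ x) ≤ x ⬝ᵥ x := by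
    intro x
    set S := K * Kᵀ + Ω with hSdef
    set u := K *ᵥ x with hu
    set v := S⁻¹ *ᵥ u with hv
    have hSv : S *ᵥ v = u := by
      rw [hv, mulVec_mulVec, Matrix.mul_nonsing_inv _ hSdet, one_mulVec]
    set w := Kᵀ *ᵥ v with hw
    have ht : x ⬝ᵥ ((Kᵀ * S⁻¹ * K) *ᵥ x) = x ⬝ᵥ w := by
      rw [hw, hv, hu, ← mulVec_mulVec, ← mulVec_mulVec]
    have ht2 : x ⬝ᵥ w = u ⬝ᵥ v := by
      rw [hw, dotProduct_mulVec, vecMul_transpose]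
    have ht3 : u ⬝ᵥ v = w ⬝ᵥ w + v ⬝ᵥ (Ω *ᵥ v) := by
      rw [← hSv, dotProduct_comm, hSdef, add_mulVec, dotProduct_add]
      congr 1
      rw [hw, ← mulVec_mulVec, dotProduct_mulVec, ← mulVec_transpose]
    have hΩv : 0 ≤ v ⬝ᵥ (Ω *ᵥ v) := by
      have := hΩ.posSemidef.dotProduct_mulVec_nonneg v
      simpa using this
    have hww : 0 ≤ w ⬝ᵥ w := Finset.sum_nonneg fun i _ => mul_self_nonneg _
    have hxx : 0 ≤ x ⬝ᵥ x := Finset.sum_nonneg fun i _ => mul_self_nonneg _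
    have hcs : (x ⬝ᵥ w) ^ 2 ≤ (x ⬝ᵥ x) * (w ⬝ᵥ w) := by
      have h := Finset.sum_mul_sq_le_sq_mul_sq Finset.univ x w
      simpa [dotProduct, sq] using h
    have ht0 : 0 ≤ x ⬝ᵥ w := by rw [ht2, ht3]; positivity
    have hwle : w ⬝ᵥ w ≤ x ⬝ᵥ w := by rw [ht2, ht3]; linarith
    rw [ht]
    nlinarith [hcs, ht0, hwle, hxx]
  refine ⟨hS, (Matrix.isUnit_iff_isUnit_det _).2 hSdet, Matrix.PosSemidef.of_dotProduct_mulVec_nonneg ?_ ?_, key⟩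
  · apply IsHermitian.sub isHermitian_one
    have h1 : (K * Kᵀ + Ω)⁻¹.IsHermitian := hS.inv.isHermitian
    have hK : (Kᵀ)ᴴ = K := by
      ext i j
      simp [conjTranspose_apply]
    rw [← hK]
    exact isHermitian_mul_mul_conjTranspose Kᵀ h1
  · intro x
    simp only [sub_mulVec, dotProduct_sub, one_mulVec, star_trivial]
    linarith [key x]
end

section
/- Let N be a positive natural number, let P : Matrix (Fin N) (Fin N) ℝ be arbitrary, let s : Fin N → ℝ satisfy s i ≥ 0 for all i, set Σ = Matrix.diagonal s, let Ω : Matrix (Fin N) (Fin N) ℝ be positive definite, and let τ : ℝ with τ > 0. Set J = τ • (P * Σ * Pᵀ) + Ω. Then the matrix (1 + τ) • (1 : Matrix (Fin N) (Fin N) ℝ) − τ^2 • (Pᵀ * J⁻¹ * P * Σ) is invertible (its determinant is nonzero). -/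
open Matrix

private lemma dotSelf_nonneg {N : ℕ} (x : Fin N → ℝ) : 0 ≤ x ⬝ᵥ x :=
  Finset.sum_nonneg fun i _ => mul_self_nonneg (x i)

private lemma det_smul_one_sub_mul_comm {N : ℕ} (c : ℝ) (hc : c ≠ 0)
    (A B : Matrix (Fin N) (Fin N) ℝ) :
    (c • (1 : Matrix (Fin N) (Fin N) ℝ) - A * B).det
      = (c • (1 : Matrix (Fin N) (Fin N) ℝ) - B * A).det := by
  have key : ∀ X Y : Matrix (Fin N) (Fin N) ℝ,
      c • (1 : Matrix (Fin N) (Fin N) ℝ) - X * Y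
        = c • ((1 : Matrix (Fin N) (Fin N) ℝ) - (c⁻¹ • X) * Y) := by
    intro X Y
    rw [smul_sub, Matrix.smul_mul, smul_smul, mul_inv_cancel₀ hc, one_smul]
  rw [key A B, key B A, Matrix.det_smul, Matrix.det_smul,
    Matrix.det_one_sub_mul_comm (c⁻¹ • A) B, Matrix.smul_mul, Matrix.mul_smul]

theorem second_factor_invertible
    (N : ℕ) (hN : 0 < N) (P : Matrix (Fin N) (Fin N) ℝ)
    (s : Fin N → ℝ) (hs : ∀ i, s i ≥ 0)
    (Ω : Matrix (Fin N) (Fin N) ℝ) (hΩ : Ω.PosDef)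
    (τ : ℝ) (hτ : τ > 0) :
    IsUnit ((1 + τ) • (1 : Matrix (Fin N) (Fin N) ℝ) -
      τ ^ 2 • (Pᵀ * (τ • (P * Matrix.diagonal s * Pᵀ) + Ω)⁻¹ * P *
        Matrix.diagonal s)) ∧
    ((1 + τ) • (1 : Matrix (Fin N) (Fin N) ℝ) -
      τ ^ 2 • (Pᵀ * (τ • (P * Matrix.diagonal s * Pᵀ) + Ω)⁻¹ * P *
        Matrix.diagonal s)).det ≠ 0 := by
  classical
  set Sg : Matrix (Fin N) (Fin N) ℝ := Matrix.diagonal s with hSg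
  set R : Matrix (Fin N) (Fin N) ℝ := Matrix.diagonal (fun i => Real.sqrt (s i)) with hR
  have hRR : R * R = Sg := by
    rw [hR, hSg, Matrix.diagonal_mul_diagonal]
    exact congrArg _ (funext fun i => Real.mul_self_sqrt (hs i))
  have hRsymm : Rᵀ = R := Matrix.diagonal_transpose _
  set B : Matrix (Fin N) (Fin N) ℝ := Real.sqrt τ • (P * R) with hB
  have hBt : Bᵀ = Real.sqrt τ • (R * Pᵀ) := by
    rw [hB, Matrix.transpose_smul, Matrix.transpose_mul, hRsymm]
  have hBBt : B * Bᵀ = τ • (P * Sg * Pᵀ) := by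
    rw [hB, hBt, Matrix.smul_mul, Matrix.mul_smul, smul_smul,
      Real.mul_self_sqrt hτ.le]
    congr 1
    rw [← hRR]
    noncomm_ring
  set J : Matrix (Fin N) (Fin N) ℝ := τ • (P * Sg * Pᵀ) + Ω with hJ
  have hJeq : J = B * Bᵀ + Ω := by rw [hJ, hBBt]
  have hBBtPSD : (B * Bᵀ).PosSemidef := by
    have := Matrix.posSemidef_self_mul_conjTranspose B
    simpa using this
  have hJPD : J.PosDef := by
    rw [hJeq]
    exact Matrix.PosDef.posSemidef_add hBBtPSD hΩ
  have hJdet : IsUnit J.det := hJPD.det_pos.ne'.isUnit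
  have hJinvPD : J⁻¹.PosDef := hJPD.inv
  -- key quadratic bound
  have key : ∀ x : Fin N → ℝ, x ⬝ᵥ ((Bᵀ * J⁻¹ * B) *ᵥ x) ≤ x ⬝ᵥ x := by
    intro x
    set u : Fin N → ℝ := J⁻¹ *ᵥ (B *ᵥ x) with hu
    set v : Fin N → ℝ := Bᵀ *ᵥ u with hv
    have hJu : J *ᵥ u = B *ᵥ x := by
      rw [hu, Matrix.mulVec_mulVec, Matrix.mul_nonsing_inv _ hJdet, Matrix.one_mulVec]
    have hLHS : (Bᵀ * J⁻¹ * B) *ᵥ x = v := by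
      rw [hv, hu, ← Matrix.mulVec_mulVec, ← Matrix.mulVec_mulVec]
    set t : ℝ := u ⬝ᵥ (J *ᵥ u) with ht
    have h1 : x ⬝ᵥ v = t := by
      rw [hv, Matrix.dotProduct_mulVec, Matrix.vecMul_transpose, ht, ← hJu,
        dotProduct_comm]
    have h2 : v ⬝ᵥ v ≤ t := by
      have hsplit : t = u ⬝ᵥ ((B * Bᵀ) *ᵥ u) + u ⬝ᵥ (Ω *ᵥ u) := by
        rw [ht, hJeq, Matrix.add_mulVec, dotProduct_add]
      have hB2 : u ⬝ᵥ ((B * Bᵀ) *ᵥ u) = v ⬝ᵥ v := by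
        rw [← Matrix.mulVec_mulVec, hv, Matrix.dotProduct_mulVec,
          ← Matrix.mulVec_transpose]
      have hΩnn : 0 ≤ u ⬝ᵥ (Ω *ᵥ u) := by
        have := hΩ.posSemidef.dotProduct_mulVec_nonneg u
        simpa using this
      rw [hsplit, hB2]; linarith
    have h3 : t ^ 2 ≤ (x ⬝ᵥ x) * (v ⬝ᵥ v) := by
      have hcs := Finset.sum_mul_sq_le_sq_mul_sq Finset.univ x v
      have hxv : x ⬝ᵥ v = ∑ i, x i * v i := rfl
      have hxx : x ⬝ᵥ x = ∑ i, x i ^ 2 := by simp [dotProduct, sq]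
      have hvv : v ⬝ᵥ v = ∑ i, v i ^ 2 := by simp [dotProduct, sq]
      rw [← h1, hxv, hxx, hvv]
      exact hcs
    have hX : 0 ≤ x ⬝ᵥ x := dotSelf_nonneg x
    have hV : 0 ≤ v ⬝ᵥ v := dotSelf_nonneg v
    rw [hLHS, h1]
    nlinarith [h2, h3, hX, hV]
  set K : Matrix (Fin N) (Fin N) ℝ := Bᵀ * J⁻¹ * B with hK
  have hKherm : K.IsHermitian := by
    have := hJinvPD.posSemidef.conjTranspose_mul_mul_same B
    simpa [hK] using this.1
  have hKnn : ∀ x : Fin N → ℝ, 0 ≤ x ⬝ᵥ (K *ᵥ x) := by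
    intro x
    have := (hJinvPD.posSemidef.conjTranspose_mul_mul_same B).dotProduct_mulVec_nonneg x
    simpa [hK] using this
  set M : Matrix (Fin N) (Fin N) ℝ :=
    (1 + τ) • (1 : Matrix (Fin N) (Fin N) ℝ) - τ • K with hM
  have hMPD : M.PosDef := by
    refine Matrix.PosDef.of_dotProduct_mulVec_pos ?_ ?_
    · show Mᴴ = M
      rw [hM, Matrix.conjTranspose_sub, Matrix.conjTranspose_smul,
        Matrix.conjTranspose_smul, Matrix.conjTranspose_one, hKherm.eq]
      norm_num
    · intro x hx
      have hxx : 0 < x ⬝ᵥ x := by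
        have := (Matrix.PosDef.one (n := Fin N) (R := ℝ)).dotProduct_mulVec_pos hx
        simpa using this
      have hq : x ⬝ᵥ (M *ᵥ x) = (1 + τ) * (x ⬝ᵥ x) - τ * (x ⬝ᵥ (K *ᵥ x)) := by
        rw [hM, Matrix.sub_mulVec, dotProduct_sub, Matrix.smul_mulVec,
          Matrix.smul_mulVec, Matrix.one_mulVec, dotProduct_smul,
          dotProduct_smul, smul_eq_mul, smul_eq_mul]
      have hKb : x ⬝ᵥ (K *ᵥ x) ≤ x ⬝ᵥ x := key x
      have : (0 : ℝ) < (1 + τ) * (x ⬝ᵥ x) - τ * (x ⬝ᵥ (K *ᵥ x)) := by nlinarith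
      simpa [hq] using this
  have hMdet : M.det ≠ 0 := hMPD.det_pos.ne'
  -- relate determinants
  set T : Matrix (Fin N) (Fin N) ℝ :=
    (1 + τ) • (1 : Matrix (Fin N) (Fin N) ℝ) - τ ^ 2 • (Pᵀ * J⁻¹ * P * Sg) with hT
  have hc : (1 : ℝ) + τ ≠ 0 := by linarith
  have hTform : T = (1 + τ) • (1 : Matrix (Fin N) (Fin N) ℝ)
      - (τ ^ 2 • (Pᵀ * J⁻¹ * P * R)) * R := by
    rw [hT, Matrix.smul_mul, ← hRR]
    congr 2
    noncomm_ring
  have hMform : M = (1 + τ) • (1 : Matrix (Fin N) (Fin N) ℝ)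
      - R * (τ ^ 2 • (Pᵀ * J⁻¹ * P * R)) := by
    rw [hM, Matrix.mul_smul]
    congr 1
    rw [hK, hBt, hB]
    simp only [Matrix.smul_mul, Matrix.mul_smul, smul_smul, Matrix.mul_assoc]
    congr 1
    · ring_nf
      rw [Real.sq_sqrt hτ.le]
      ring
  have hdet : T.det = M.det := by
    rw [hTform, hMform]
    exact det_smul_one_sub_mul_comm (1 + τ) hc _ R
  have hTdet : T.det ≠ 0 := by rw [hdet]; exact hMdet
  refine ⟨(Matrix.isUnit_iff_isUnit_det T).2 hTdet.isUnit, hTdet⟩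
end

section
/- Let N be a positive natural number, let P : Matrix (Fin N) (Fin N) ℝ be arbitrary, let s : Fin N → ℝ satisfy s i ≥ 0 for all i, set Σ = Matrix.diagonal s, let Ω : Matrix (Fin N) (Fin N) ℝ be positive definite, let τ : ℝ with τ > 0, and let ε : ℝ with ε > 0. Set J = τ • (P * Σ * Pᵀ) + Ω. Then the regularized adjusted risk matrix Σ̂ = (1 + τ) • (Σ + ε • (1 : Matrix (Fin N) (Fin N) ℝ)) − τ^2 • ((Σ + ε • 1) * Pᵀ * J⁻¹ * P * Σ) is invertible (its determinant is nonzero). -/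
open Matrix

theorem regularization_calibration
    (N : ℕ) (hN : 0 < N) (P : Matrix (Fin N) (Fin N) ℝ)
    (s : Fin N → ℝ) (hs : ∀ i, s i ≥ 0)
    (Ω : Matrix (Fin N) (Fin N) ℝ) (hΩ : Ω.PosDef)
    (τ : ℝ) (hτ : τ > 0) (ε : ℝ) (hε : ε > 0) :
    IsUnit ((1 + τ) • (Matrix.diagonal s + ε • (1 : Matrix (Fin N) (Fin N) ℝ)) -
      τ ^ 2 • ((Matrix.diagonal s + ε • (1 : Matrix (Fin N) (Fin N) ℝ)) * Pᵀ *
        (τ • (P * Matrix.diagonal s * Pᵀ) + Ω)⁻¹ * P * Matrix.diagonal s)) ∧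
    ((1 + τ) • (Matrix.diagonal s + ε • (1 : Matrix (Fin N) (Fin N) ℝ)) -
      τ ^ 2 • ((Matrix.diagonal s + ε • (1 : Matrix (Fin N) (Fin N) ℝ)) * Pᵀ *
        (τ • (P * Matrix.diagonal s * Pᵀ) + Ω)⁻¹ * P * Matrix.diagonal s)).det ≠ 0 := by
  classical
  set D := Matrix.diagonal s with hDdef
  set A := D + ε • (1 : Matrix (Fin N) (Fin N) ℝ) with hAdef
  set J := τ • (P * D * Pᵀ) + Ω with hJdef
  have hDpsd : D.PosSemidef := Matrix.posSemidef_diagonal_iff.mpr hs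
  have hPDP : (P * D * Pᵀ).PosSemidef := by
    simpa using hDpsd.mul_mul_conjTranspose_same P
  have hτPDP : (τ • (P * D * Pᵀ)).PosSemidef := by
    refine Matrix.PosSemidef.of_dotProduct_mulVec_nonneg ?_ fun x => ?_
    · show (τ • (P * D * Pᵀ))ᴴ = _
      rw [Matrix.conjTranspose_smul, hPDP.1]
      simp
    · have := hPDP.dotProduct_mulVec_nonneg x
      simp only [Matrix.smul_mulVec, dotProduct_smul, smul_eq_mul]
      positivity
  have hJpd : J.PosDef := Matrix.PosDef.posSemidef_add hτPDP hΩ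
  have hJinv : J⁻¹.PosSemidef := hJpd.inv.posSemidef
  set B := (1 + τ) • (1 : Matrix (Fin N) (Fin N) ℝ) - τ ^ 2 • (Pᵀ * J⁻¹ * P * D) with hBdef
  have hfact : (1 + τ) • A - τ ^ 2 • (A * Pᵀ * J⁻¹ * P * D) = A * B := by
    rw [hBdef, Matrix.mul_sub, Matrix.mul_smul, Matrix.mul_one, Matrix.mul_smul]
    simp only [Matrix.mul_assoc]
  have hAunit : IsUnit A := by
    have : A = Matrix.diagonal (fun i => s i + ε) := by
      rw [hAdef, hDdef, Matrix.smul_one_eq_diagonal, Matrix.diagonal_add]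
    rw [this, Matrix.isUnit_iff_isUnit_det, Matrix.det_diagonal]
    refine isUnit_iff_ne_zero.mpr (Finset.prod_ne_zero_iff.mpr fun i _ => ?_)
    have := hs i; positivity
  have hker : ∀ x : Fin N → ℝ, B *ᵥ x = 0 → x = 0 := by
    intro x hx
    set y := D *ᵥ x with hy
    set z := P *ᵥ y with hz
    set w := J⁻¹ *ᵥ z with hw
    set u := Pᵀ *ᵥ w with hu
    have hux : (1 + τ) • x = τ ^ 2 • u := by
      rw [hBdef, Matrix.sub_mulVec, Matrix.smul_mulVec, Matrix.one_mulVec,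
        Matrix.smul_mulVec, sub_eq_zero] at hx
      rw [hx]
      congr 1
      rw [hu, hw, hz, hy]
      simp only [← Matrix.mulVec_mulVec, Matrix.mul_assoc]
    -- scalar quantities
    set c := x ⬝ᵥ y with hc
    set a := z ⬝ᵥ w with ha
    set q := u ⬝ᵥ (D *ᵥ u) with hq
    have hyi : ∀ i, y i = s i * x i := fun i => by
      rw [hy, hDdef]; exact Matrix.mulVec_diagonal s x i
    have hcsum : c = ∑ i, s i * x i ^ 2 := by
      rw [hc, dotProduct]
      exact Finset.sum_congr rfl fun i _ => by rw [hyi i]; ring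
    have hcnn : 0 ≤ c := by
      rw [hcsum]
      exact Finset.sum_nonneg fun i _ => mul_nonneg (hs i) (sq_nonneg _)
    have hann : 0 ≤ a := by
      have := hJinv.dotProduct_mulVec_nonneg z
      simpa [hw, ha] using this
    have hqnn : 0 ≤ q := by
      have := hDpsd.dotProduct_mulVec_nonneg u
      simpa [hq] using this
    -- a = y ⬝ᵥ u
    have hayu : a = y ⬝ᵥ u := by
      have : y ⬝ᵥ u = z ⬝ᵥ w := by
        rw [hu, Matrix.dotProduct_mulVec, Matrix.vecMul_transpose, ← hz]
      rw [ha, this]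
    -- (1 + τ) * c = τ^2 * a
    have h1 : (1 + τ) * c = τ ^ 2 * a := by
      have := congrArg (fun v => y ⬝ᵥ v) hux
      simp only [dotProduct_smul, smul_eq_mul] at this
      rw [hayu, ← this, hc, dotProduct_comm]
    -- Cauchy-Schwarz : (y ⬝ᵥ u)^2 ≤ c * q
    have h2 : a ^ 2 ≤ c * q := by
      have cs := Finset.sum_mul_sq_le_sq_mul_sq Finset.univ
        (fun i => Real.sqrt (s i) * x i) (fun i => Real.sqrt (s i) * u i)
      have e1 : ∀ i : Fin N, (Real.sqrt (s i) * x i) * (Real.sqrt (s i) * u i)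
          = s i * x i * u i := fun i => by
        have h := Real.mul_self_sqrt (hs i); linear_combination (x i * u i) * h
      have e2 : ∀ i : Fin N, (Real.sqrt (s i) * x i) ^ 2 = s i * x i ^ 2 := fun i => by
        rw [mul_pow, Real.sq_sqrt (hs i)]
      have e3 : ∀ i : Fin N, (Real.sqrt (s i) * u i) ^ 2 = s i * u i ^ 2 := fun i => by
        rw [mul_pow, Real.sq_sqrt (hs i)]
      simp only [e1, e2, e3] at cs
      have hay : a = ∑ i, s i * x i * u i := by
        rw [hayu, dotProduct]
        exact Finset.sum_congr rfl fun i _ => by rw [hyi i]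
      have hqsum : q = ∑ i, s i * u i ^ 2 := by
        rw [hq, dotProduct]
        refine Finset.sum_congr rfl fun i _ => ?_
        rw [hDdef, Matrix.mulVec_diagonal]; ring
      rw [hay, hcsum, hqsum]
      exact cs
    -- τ * q ≤ a
    have h3 : τ * q ≤ a := by
      have hJz : J *ᵥ w = z := by
        rw [hw, Matrix.mulVec_mulVec, Matrix.mul_nonsing_inv _
          ((Matrix.isUnit_iff_isUnit_det _).mp hJpd.isUnit), Matrix.one_mulVec]
      have hwq : w ⬝ᵥ ((P * D * Pᵀ) *ᵥ w) = q := by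
        rw [hq, hu, ← Matrix.mulVec_mulVec, ← Matrix.mulVec_mulVec,
          Matrix.dotProduct_mulVec (v := w), Matrix.mulVec_transpose]
      have hΩnn : 0 ≤ w ⬝ᵥ (Ω *ᵥ w) := by
        have := hΩ.posSemidef.dotProduct_mulVec_nonneg w; simpa using this
      have : w ⬝ᵥ (J *ᵥ w) = τ * q + w ⬝ᵥ (Ω *ᵥ w) := by
        rw [hJdef, Matrix.add_mulVec, dotProduct_add, Matrix.smul_mulVec,
          dotProduct_smul, smul_eq_mul, hwq]
      rw [hJz] at this
      have : a = τ * q + w ⬝ᵥ (Ω *ᵥ w) := by rw [ha, dotProduct_comm]; exact this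
      linarith
    -- conclude c = 0
    have k1 : τ * a ^ 2 ≤ c * a := by
      calc τ * a ^ 2 ≤ τ * (c * q) := mul_le_mul_of_nonneg_left h2 hτ.le
        _ = c * (τ * q) := by ring
        _ ≤ c * a := mul_le_mul_of_nonneg_left h3 hcnn
    have k2 : τ ^ 3 * (τ * a ^ 2) ≤ τ ^ 3 * (c * a) :=
      mul_le_mul_of_nonneg_left k1 (by positivity)
    have h1' : τ ^ 3 * (c * a) = τ * (1 + τ) * c ^ 2 := by
      linear_combination (-τ * c) * h1
    have h1sq : τ ^ 3 * (τ * a ^ 2) = (1 + τ) ^ 2 * c ^ 2 := by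
      linear_combination (-((1 + τ) * c + τ ^ 2 * a)) * h1
    have hc2 : c ^ 2 ≤ 0 := by nlinarith [k2, h1', h1sq, sq_nonneg c]
    have hc0 : c = 0 := by
      have : c ^ 2 = 0 := le_antisymm hc2 (sq_nonneg c)
      exact pow_eq_zero_iff two_ne_zero |>.mp this
    have hy0 : y = 0 := by
      have hterm : ∀ i ∈ Finset.univ, 0 ≤ s i * x i ^ 2 :=
        fun i _ => mul_nonneg (hs i) (sq_nonneg _)
      have := (Finset.sum_eq_zero_iff_of_nonneg hterm).mp (hcsum ▸ hc0)
      funext i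
      have hi := this i (Finset.mem_univ i)
      rw [hyi i]
      rcases mul_eq_zero.mp hi with h | h
      · simp [h]
      · have : x i = 0 := by nlinarith [sq_nonneg (x i)]
        simp [this]
    have hu0 : u = 0 := by
      rw [hu, hw, hz, hy0]
      simp
    rw [hu0, smul_zero] at hux
    have h1τ : (1 + τ) ≠ 0 := by linarith
    have := smul_eq_zero.mp hux
    exact this.resolve_left h1τ
  have hBunit : IsUnit B := by
    rw [← Matrix.mulVec_injective_iff_isUnit]
    intro x₁ x₂ h12
    have : B *ᵥ (x₁ - x₂) = 0 := by
      rw [Matrix.mulVec_sub, h12, sub_self]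
    exact sub_eq_zero.mp (hker _ this)
  have hABunit : IsUnit (A * B) := hAunit.mul hBunit
  rw [hfact]
  exact ⟨hABunit, ((Matrix.isUnit_iff_isUnit_det _).mp hABunit).ne_zero⟩
end

section
/- Let N be a positive natural number, let Σ, Ω : Matrix (Fin N) (Fin N) ℝ be positive definite, let τ : ℝ with τ > 0, let P : Matrix (Fin N) (Fin N) ℝ be arbitrary, and let Π, Q : Fin N → ℝ. Then the matrix (τ • Σ)⁻¹ + Pᵀ * Ω⁻¹ * P is positive definite (hence invertible), and the Black–Litterman posterior mean identity holds: Π + (τ • Σ) *ᵥ (Pᵀ *ᵥ ((τ • (P * Σ * Pᵀ) + Ω)⁻¹ *ᵥ (Q − P *ᵥ Π))) = ((τ • Σ)⁻¹ + Pᵀ * Ω⁻¹ * P)⁻¹ *ᵥ ((τ • Σ)⁻¹ *ᵥ Π + Pᵀ *ᵥ (Ω⁻¹ *ᵥ Q)). -/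
open Matrix

private lemma posdef_smul {N : ℕ} {S : Matrix (Fin N) (Fin N) ℝ} (hS : S.PosDef)
    {τ : ℝ} (hτ : 0 < τ) : (τ • S).PosDef := by
  refine ⟨?_, fun x hx => ?_⟩
  · unfold Matrix.IsHermitian
    rw [conjTranspose_smul, hS.1]
    simp
  · exact (Matrix.PosDef.smul hS hτ).2 hx

theorem bl_posterior_mean_identity
    (N : ℕ) (hN : 0 < N)
    (S Ω : Matrix (Fin N) (Fin N) ℝ) (hS : S.PosDef) (hΩ : Ω.PosDef)
    (τ : ℝ) (hτ : τ > 0) (P : Matrix (Fin N) (Fin N) ℝ)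
    (pi Q : Fin N → ℝ) :
    ((τ • S)⁻¹ + Pᵀ * Ω⁻¹ * P).PosDef ∧
    IsUnit ((τ • S)⁻¹ + Pᵀ * Ω⁻¹ * P) ∧
    pi + (τ • S) *ᵥ (Pᵀ *ᵥ ((τ • (P * S * Pᵀ) + Ω)⁻¹ *ᵥ (Q - P *ᵥ pi))) =
      ((τ • S)⁻¹ + Pᵀ * Ω⁻¹ * P)⁻¹ *ᵥ
        ((τ • S)⁻¹ *ᵥ pi + Pᵀ *ᵥ (Ω⁻¹ *ᵥ Q)) := by
  set T := τ • S with hT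
  have hTpd : T.PosDef := posdef_smul hS hτ
  have hTinv : T⁻¹.PosDef := hTpd.inv
  have hΩinv : Ω⁻¹.PosDef := hΩ.inv
  have hPOP : (Pᵀ * Ω⁻¹ * P).PosSemidef := by
    have := hΩinv.posSemidef.conjTranspose_mul_mul_same P
    simpa using this
  have hA : ((τ • S)⁻¹ + Pᵀ * Ω⁻¹ * P).PosDef := hTinv.add_posSemidef hPOP
  refine ⟨hA, hA.isUnit, ?_⟩
  set A := T⁻¹ + Pᵀ * Ω⁻¹ * P with hAdef
  have hMrw : τ • (P * S * Pᵀ) + Ω = P * T * Pᵀ + Ω := by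
    rw [hT, Matrix.mul_smul, Matrix.smul_mul]
  have hPTP : (P * T * Pᵀ).PosSemidef := by
    have := hTpd.posSemidef.mul_mul_conjTranspose_same P
    simpa using this
  have hMpd : (τ • (P * S * Pᵀ) + Ω).PosDef := by
    rw [hMrw]; exact Matrix.PosDef.posSemidef_add hPTP hΩ
  set M := τ • (P * S * Pᵀ) + Ω with hMdef
  have hMinv : M * M⁻¹ = 1 := Matrix.mul_nonsing_inv _ (isUnit_iff_isUnit_det _ |>.mp hMpd.isUnit)
  have hTi : T⁻¹ * T = 1 := Matrix.nonsing_inv_mul _ (isUnit_iff_isUnit_det _ |>.mp hTpd.isUnit)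
  have hΩi : Ω⁻¹ * Ω = 1 := Matrix.nonsing_inv_mul _ (isUnit_iff_isUnit_det _ |>.mp hΩ.isUnit)
  have hAi : A⁻¹ * A = 1 := Matrix.nonsing_inv_mul _ (isUnit_iff_isUnit_det _ |>.mp hA.isUnit)
  have key : A * T * Pᵀ = Pᵀ * Ω⁻¹ * M := by
    rw [hAdef, hMrw]
    rw [Matrix.add_mul, Matrix.add_mul, hTi, Matrix.one_mul, Matrix.mul_add,
      Matrix.mul_assoc Pᵀ Ω⁻¹ Ω, hΩi, Matrix.mul_one]
    noncomm_ring
  have main : A *ᵥ (pi + T *ᵥ (Pᵀ *ᵥ (M⁻¹ *ᵥ (Q - P *ᵥ pi)))) =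
      T⁻¹ *ᵥ pi + Pᵀ *ᵥ (Ω⁻¹ *ᵥ Q) := by
    rw [mulVec_add, mulVec_mulVec, mulVec_mulVec, mulVec_mulVec, key,
      Matrix.mul_assoc (Pᵀ * Ω⁻¹) M M⁻¹, hMinv, Matrix.mul_one,
      hAdef, add_mulVec, mulVec_sub, mulVec_mulVec pi (Pᵀ * Ω⁻¹) P,
      mulVec_mulVec Q Pᵀ Ω⁻¹]
    abel
  calc pi + T *ᵥ (Pᵀ *ᵥ (M⁻¹ *ᵥ (Q - P *ᵥ pi)))
      = A⁻¹ *ᵥ (A *ᵥ (pi + T *ᵥ (Pᵀ *ᵥ (M⁻¹ *ᵥ (Q - P *ᵥ pi))))) := by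
        rw [mulVec_mulVec _ A⁻¹ A, hAi, one_mulVec]
    _ = A⁻¹ *ᵥ (T⁻¹ *ᵥ pi + Pᵀ *ᵥ (Ω⁻¹ *ᵥ Q)) := by rw [main]
end

section
/- Let N be a positive natural number, let Σ, Ω : Matrix (Fin N) (Fin N) ℝ be positive definite, let τ : ℝ with τ > 0, and let P : Matrix (Fin N) (Fin N) ℝ be arbitrary. Then the Black–Litterman posterior covariance identity holds: (1 + τ) • Σ − τ^2 • (Σ * Pᵀ * (τ • (P * Σ * Pᵀ) + Ω)⁻¹ * P * Σ) = Σ + ((τ • Σ)⁻¹ + Pᵀ * Ω⁻¹ * P)⁻¹. -/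
open Matrix

lemma posDef_smul' {n : ℕ} {A : Matrix (Fin n) (Fin n) ℝ} (hA : A.PosDef)
    {c : ℝ} (hc : 0 < c) : (c • A).PosDef := by
  refine ⟨?_, fun x hx => ?_⟩
  · unfold Matrix.IsHermitian
    rw [conjTranspose_smul, hA.isHermitian.eq]
    simp
  · exact (hA.smul hc).2 hx

lemma woodbury' {n : ℕ} (A B P : Matrix (Fin n) (Fin n) ℝ)
    (hA : A.PosDef) (hB : B.PosDef) :
    (A⁻¹ + Pᵀ * B⁻¹ * P)⁻¹ = A - A * Pᵀ * (P * A * Pᵀ + B)⁻¹ * (P * A) := by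
  have hBi : B⁻¹.PosDef := hB.inv
  have hPAP : (P * A * Pᵀ).PosSemidef := by
    simpa using hA.posSemidef.mul_mul_conjTranspose_same P
  have hM : (P * A * Pᵀ + B).PosDef := Matrix.PosDef.posSemidef_add hPAP hB
  set M := P * A * Pᵀ + B with hMdef
  have hMinv : M * M⁻¹ = 1 := mul_nonsing_inv _ (isUnit_iff_isUnit_det M |>.mp hM.isUnit)
  have hAinv : A⁻¹ * A = 1 := nonsing_inv_mul _ (isUnit_iff_isUnit_det A |>.mp hA.isUnit)
  have hBinv : B⁻¹ * B = 1 := nonsing_inv_mul _ (isUnit_iff_isUnit_det B |>.mp hB.isUnit)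
  have e0 : B⁻¹ * (P * A * Pᵀ) * M⁻¹ = B⁻¹ - M⁻¹ := by
    have h : B⁻¹ * (P * A * Pᵀ) = B⁻¹ * M - 1 := by
      rw [hMdef, mul_add, hBinv]; abel
    rw [h, sub_mul, one_mul, mul_assoc, hMinv, mul_one]
  have t1 : A⁻¹ * (A * Pᵀ * M⁻¹ * (P * A)) = Pᵀ * M⁻¹ * (P * A) := by
    rw [show A * Pᵀ * M⁻¹ * (P * A) = A * (Pᵀ * M⁻¹ * (P * A)) by noncomm_ring,
      ← mul_assoc, hAinv, one_mul]
  have t2 : Pᵀ * B⁻¹ * P * (A * Pᵀ * M⁻¹ * (P * A))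
      = Pᵀ * B⁻¹ * (P * A) - Pᵀ * M⁻¹ * (P * A) := by
    rw [show Pᵀ * B⁻¹ * P * (A * Pᵀ * M⁻¹ * (P * A))
        = Pᵀ * (B⁻¹ * (P * A * Pᵀ) * M⁻¹) * (P * A) by noncomm_ring, e0]
    noncomm_ring
  have key : (A⁻¹ + Pᵀ * B⁻¹ * P) * (A - A * Pᵀ * M⁻¹ * (P * A)) = 1 := by
    rw [mul_sub, add_mul, add_mul, hAinv, t1, t2]
    noncomm_ring
  exact inv_eq_right_inv key

theorem bl_posterior_covariance_identity
    (N : ℕ) (hN : 0 < N)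
    (S Ω : Matrix (Fin N) (Fin N) ℝ) (hS : S.PosDef) (hΩ : Ω.PosDef)
    (τ : ℝ) (hτ : τ > 0) (P : Matrix (Fin N) (Fin N) ℝ) :
    (1 + τ) • S - τ ^ 2 • (S * Pᵀ * (τ • (P * S * Pᵀ) + Ω)⁻¹ * P * S) =
      S + ((τ • S)⁻¹ + Pᵀ * Ω⁻¹ * P)⁻¹ := by
  have hA : (τ • S).PosDef := posDef_smul' hS hτ
  rw [woodbury' (τ • S) Ω P hA hΩ]
  have h1 : P * (τ • S) * Pᵀ = τ • (P * S * Pᵀ) := by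
    simp [mul_smul_comm, smul_mul_assoc]
  rw [h1]
  have h2 : (τ • S) * Pᵀ * (τ • (P * S * Pᵀ) + Ω)⁻¹ * (P * (τ • S))
      = τ ^ 2 • (S * Pᵀ * (τ • (P * S * Pᵀ) + Ω)⁻¹ * P * S) := by
    simp only [smul_mul_assoc, mul_smul_comm, smul_smul, pow_two, mul_assoc]
  rw [h2, add_smul, one_smul]
  abel
end
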